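/- Let ω = (ω_n, …, ω_1, ω_0) be a general basis of the polynomials of degree ≤ n over a field F, let 0 < k < n, and let M be any (n−k)×n matrix over F. Then detp_ω(M) = det([M; X_{ω,k}]) as an identity in F[x], where [M; X_{ω,k}] is the n×n matrix over F[x] obtained by stacking M on top of X_{ω,k}. -/

import Mathlib

open Polynomial Matrix BigOperators

noncomputable section

/-- A *general basis* of the polynomials of degree ≤ `n` over `K`:
`ω i` is monic of degree `i` for every `i ≤ n`. -/
def IsGeneralBasis {K : Type*} [Field K] (n : ℕ) (ω : ℕ → Polynomial K) : Prop :=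
  ∀ i ≤ n, (ω i).Monic ∧ (ω i).natDegree = i

/-- The `k × n` matrix `X_{ω,k}`: rows `1,…,k` carry `−I_k` in (1-based) columns
`n−k, …, n−1`, and the last column of row `i` is `ω_{k+1−i}`. -/
def Xmat {K : Type*} [Field K] (n k : ℕ) (ω : ℕ → Polynomial K) :
    Matrix (Fin k) (Fin n) (Polynomial K) :=
  Matrix.of fun i j =>
    if (j : ℕ) = n - k - 1 + (i : ℕ) then -1
    else if (j : ℕ) = n - 1 then ω (k - (i : ℕ))
    else 0

/-- Stacking an `(n−k) × n` scalar matrix on top of a `k × n` polynomial matrix. -/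
def stackMat {K : Type*} [Field K] {n k : ℕ}
    (M : Matrix (Fin (n - k)) (Fin n) K) (Y : Matrix (Fin k) (Fin n) (Polynomial K)) :
    Matrix (Fin n) (Fin n) (Polynomial K) :=
  Matrix.of fun i j =>
    if h : (i : ℕ) < n - k then Polynomial.C (M ⟨(i : ℕ), h⟩ j)
    else Y ⟨(i : ℕ) - (n - k), by have := i.isLt; omega⟩ j

/-- The determinental polynomial of an `(n−k) × n` matrix `M` associated with `ω`:
`detp_ω M = Σ_{i=0}^k det(M̂_i) · ω_i` where `M̂_i` consists of the first `n−k−1`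
columns of `M` together with its (1-based) `(n−i)`-th column. -/
def detp {K : Type*} [Field K] {n k : ℕ} (hkn : k < n) (ω : ℕ → Polynomial K)
    (M : Matrix (Fin (n - k)) (Fin n) K) : Polynomial K :=
  ∑ i ∈ Finset.range (k + 1),
    Polynomial.C (Matrix.det (Matrix.of fun r c : Fin (n - k) =>
      if (c : ℕ) < n - k - 1 then M r ⟨(c : ℕ), by have := c.isLt; omega⟩
      else M r ⟨n - 1 - i, by omega⟩)) * ω i


section Aux
variable {R : Type*} [CommRing R] {ι m : Type*} [DecidableEq m] [Fintype m]

lemma updateColumn_updateColumn' (A : Matrix m m R) (j : m) (f g : m → R) :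
    updateCol (updateCol A j f) j g = updateCol A j g := by
  ext i c
  by_cases h : c = j <;> simp [Matrix.updateCol_apply, h]

lemma det_updateColumn_add_sum (A : Matrix m m R) (j : m) (s : Finset ι)
    (g : ι → m) (c : ι → R) (hg : ∀ i ∈ s, g i ≠ j) :
    det (updateCol A j (fun r => A r j + ∑ i ∈ s, c i * A r (g i))) = det A := by
  classical
  induction s using Finset.induction_on with
  | empty => simp [Matrix.updateCol_eq_self]
  | @insert a s ha ih =>
    have hga : g a ≠ j := hg a (Finset.mem_insert_self a s)
    have ih' := ih (fun i hi => hg i (Finset.mem_insert_of_mem hi))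
    set B := updateCol A j (fun r => A r j + ∑ i ∈ s, c i * A r (g i)) with hB
    have hcol : (fun r => A r j + ∑ i ∈ insert a s, c i * A r (g i))
        = fun r => B r j + c a • B r (g a) := by
      funext r
      rw [Finset.sum_insert ha]
      simp only [hB, Matrix.updateCol_self, Matrix.updateCol_ne hga]
      rw [smul_eq_mul]; ring
    rw [hcol, ← updateColumn_updateColumn' A j (fun r => A r j + ∑ i ∈ s, c i * A r (g i)), ← hB,
      det_updateCol_add_smul_self B (Ne.symm hga) (c a), hB, ih']

lemma det_updateColumn_sum' (A : Matrix m m R) (j : m) (s : Finset ι) (f : ι → m → R) :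
    det (updateCol A j (fun r => ∑ i ∈ s, f i r)) = ∑ i ∈ s, det (updateCol A j (f i)) := by
  classical
  induction s using Finset.induction_on with
  | empty =>
    simp only [Finset.sum_empty]
    exact det_eq_zero_of_column_eq_zero j (fun i => by simp)
  | @insert a s ha ih =>
    simp only [Finset.sum_insert ha]
    rw [show (fun r => f a r + ∑ i ∈ s, f i r) = (fun r => f a r) + (fun r => ∑ i ∈ s, f i r) from rfl,
      det_updateCol_add, ih]

end Aux

section Main
variable {K : Type*} [Field K]

/-- The stacked matrix after column operations clearing the last column of the bottom rows. -/
def Nmat (n k : ℕ) (hk0 : 0 < k) (hkn : k < n) (ω : ℕ → Polynomial K)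
    (M : Matrix (Fin (n - k)) (Fin n) K) : Matrix (Fin n) (Fin n) (Polynomial K) :=
  updateCol (stackMat M (Xmat n k ω)) ⟨n - 1, by omega⟩
    (fun r => stackMat M (Xmat n k ω) r ⟨n - 1, by omega⟩ +
      ∑ i : Fin k, ω (k - (i : ℕ)) *
        stackMat M (Xmat n k ω) r ⟨n - k - 1 + (i : ℕ), by have := i.isLt; omega⟩)

lemma det_Nmat (n k : ℕ) (hk0 : 0 < k) (hkn : k < n) (ω : ℕ → Polynomial K)
    (M : Matrix (Fin (n - k)) (Fin n) K) :
    (Nmat n k hk0 hkn ω M).det = (stackMat M (Xmat n k ω)).det :=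
  det_updateColumn_add_sum _ _ _ _ _
    (fun i _ => Fin.ne_of_val_ne (by have := i.isLt; simp; omega))

lemma Nmat_eq (n k : ℕ) (hk0 : 0 < k) (hkn : k < n) (ω : ℕ → Polynomial K)
    (hω : IsGeneralBasis n ω) (M : Matrix (Fin (n - k)) (Fin n) K) :
    Nmat n k hk0 hkn ω M = Matrix.of fun (i j : Fin n) =>
      if (j : ℕ) = n - 1 then
        (if hi : (i : ℕ) < n - k then
          ∑ t ∈ Finset.range (k + 1),
            ω t * Polynomial.C (M ⟨(i : ℕ), hi⟩ ⟨n - 1 - t, by omega⟩)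
        else 0)
      else stackMat M (Xmat n k ω) i j := by
  have hω0 : ω 0 = 1 := ((hω 0 (by omega)).1.natDegree_eq_zero).mp (hω 0 (by omega)).2
  refine Matrix.ext fun i j => ?_
  by_cases hj : (j : ℕ) = n - 1
  · obtain ⟨jv, hjlt⟩ := j
    simp only at hj
    subst hj
    rw [Nmat, Matrix.updateCol_self, Matrix.of_apply, if_pos rfl]
    by_cases hi : (i : ℕ) < n - k
    · rw [dif_pos hi]
      have hS : ∀ (c : Fin n), stackMat M (Xmat n k ω) i c = Polynomial.C (M ⟨(i:ℕ), hi⟩ c) :=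
        fun c => by rw [stackMat, Matrix.of_apply, dif_pos hi]
      rw [hS]
      simp only [hS]
      rw [Finset.sum_range_succ']
      simp only [hω0, one_mul, Nat.sub_zero]
      rw [add_comm]
      congr 1
      rw [← Fin.sum_univ_eq_sum_range
        (fun t => ω (t + 1) * Polynomial.C (M ⟨(i:ℕ), hi⟩ ⟨n - 1 - (t + 1), by omega⟩)) k,
        ← Equiv.sum_comp Fin.revPerm
        (fun t : Fin k => ω ((t:ℕ) + 1) * Polynomial.C (M ⟨(i:ℕ), hi⟩ ⟨n - 1 - ((t:ℕ) + 1), by omega⟩))]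
      refine Finset.sum_congr rfl (fun t _ => ?_)
      have htk := t.isLt
      have hv : ((Fin.revPerm t : Fin k) : ℕ) = k - 1 - (t : ℕ) := by
        simp [Fin.revPerm, Fin.rev]; omega
      have h1 : ((Fin.revPerm t : Fin k) : ℕ) + 1 = k - (t : ℕ) := by omega
      simp only [h1]
      exact congrArg₂ _ rfl (congrArg _ (congrArg _ (Fin.ext (by simp only [Fin.val_mk]; omega))))
    · rw [dif_neg hi]
      have hib := i.isLt
      set t₀ : ℕ := (i : ℕ) - (n - k) with ht₀
      have ht₀k : t₀ < k := by omega
      have hS1 : stackMat M (Xmat n k ω) i ⟨n - 1, by omega⟩ = ω (k - t₀) := by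
        rw [stackMat, Matrix.of_apply, dif_neg hi, Xmat, Matrix.of_apply]
        rw [if_neg (by simp; omega), if_pos (by simp)]
      have hS2 : ∀ t : Fin k, stackMat M (Xmat n k ω) i ⟨n - k - 1 + (t : ℕ), by have := t.isLt; omega⟩
          = if (t : ℕ) = t₀ then -1 else 0 := by
        intro t
        have htb := t.isLt
        rw [stackMat, Matrix.of_apply, dif_neg hi, Xmat, Matrix.of_apply]
        by_cases h : (t : ℕ) = t₀
        · rw [if_pos (by simp; omega), if_pos h]
        · rw [if_neg (by simp; omega), if_neg (by simp; omega), if_neg h]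
      rw [hS1]
      simp only [hS2]
      have hsum : ∑ x : Fin k, ω (k - (x:ℕ)) * (if (x:ℕ) = t₀ then (-1 : Polynomial K) else 0)
          = -ω (k - t₀) := by
        rw [Finset.sum_eq_single (⟨t₀, ht₀k⟩ : Fin k)]
        · simp
        · intro b _ hb
          rw [if_neg (fun h => hb (Fin.ext h)), mul_zero]
        · intro h; exact absurd (Finset.mem_univ _) h
      rw [hsum, add_neg_cancel]
  · have hjne : j ≠ ⟨n - 1, by omega⟩ := fun h => hj (by rw [h])
    rw [Nmat, Matrix.updateCol_ne hjne, Matrix.of_apply, if_neg hj]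

end Main

section Main2
variable {K : Type*} [Field K]

/-- Reindexing `Fin (n-k) ⊕ Fin k ≃ Fin n`. -/
def eSum (n k : ℕ) (hkn : k < n) : (Fin (n - k) ⊕ Fin k) ≃ Fin n :=
  finSumFinEquiv.trans (finCongr (by omega))

def eSub (n k : ℕ) (hk0 : 0 < k) (hkn : k < n) :
    Fin (k + 1) ≃ {j : Fin n // n - k - 1 ≤ (j : ℕ)} where
  toFun j := ⟨⟨n - k - 1 + (j : ℕ), by have := j.isLt; omega⟩, by simp⟩
  invFun j := ⟨(j.1 : ℕ) - (n - k - 1), by have := j.1.isLt; have := j.2; omega⟩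
  left_inv j := by ext; simp
  right_inv j := by ext; have := j.2; simp; omega

def τperm (n k : ℕ) (hk0 : 0 < k) (hkn : k < n) : Equiv.Perm (Fin n) :=
  ((finRotate (k + 1))⁻¹).extendDomain (eSub n k hk0 hkn)

lemma τperm_fix (n k : ℕ) (hk0 : 0 < k) (hkn : k < n) (j : Fin n) (hj : (j : ℕ) < n - k - 1) :
    τperm n k hk0 hkn j = j :=
  Equiv.Perm.extendDomain_apply_not_subtype _ _ (by omega)

lemma τperm_apply (n k : ℕ) (hk0 : 0 < k) (hkn : k < n) (j : Fin n) (hj : n - k - 1 ≤ (j : ℕ)) :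
    τperm n k hk0 hkn j =
      ⟨n - k - 1 + (((finRotate (k + 1))⁻¹ ⟨(j : ℕ) - (n - k - 1), by have := j.isLt; omega⟩ : Fin (k+1)) : ℕ),
        by have := ((finRotate (k + 1))⁻¹ ⟨(j : ℕ) - (n - k - 1), by have := j.isLt; omega⟩).isLt; omega⟩ := by
  rw [τperm, Equiv.Perm.extendDomain_apply_subtype _ (eSub n k hk0 hkn) (show n - k - 1 ≤ ((j : Fin n) : ℕ) from hj)]
  rfl

lemma finRotate_inv_zero (k : ℕ) : ((finRotate (k + 1))⁻¹ (0 : Fin (k+1))) = Fin.last k := by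
  rw [Equiv.Perm.inv_def, Equiv.symm_apply_eq, finRotate_last]

lemma finRotate_inv_succ (k : ℕ) (t : ℕ) (ht : t < k) :
    ((finRotate (k + 1))⁻¹ (⟨t + 1, by omega⟩ : Fin (k+1))) = ⟨t, by omega⟩ := by
  rw [Equiv.Perm.inv_def, Equiv.symm_apply_eq, finRotate_succ_apply]
  ext
  rw [Fin.val_add_one, if_neg (fun h => by simp [Fin.ext_iff, Fin.last] at h; omega)]

lemma τperm_first (n k : ℕ) (hk0 : 0 < k) (hkn : k < n) :
    τperm n k hk0 hkn ⟨n - k - 1, by omega⟩ = ⟨n - 1, by omega⟩ := by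
  rw [τperm_apply n k hk0 hkn _ (by simp)]
  have : (⟨(n - k - 1 : ℕ) - (n - k - 1), by omega⟩ : Fin (k+1)) = 0 := by
    ext; simp
  simp only [Fin.val_mk, this, finRotate_inv_zero]
  ext; simp [Fin.last]; omega

lemma τperm_succ (n k : ℕ) (hk0 : 0 < k) (hkn : k < n) (t : ℕ) (ht : t < k) :
    τperm n k hk0 hkn ⟨n - k + t, by omega⟩ = ⟨n - k - 1 + t, by omega⟩ := by
  rw [τperm_apply n k hk0 hkn _ (by simp; omega)]
  have : (⟨(n - k + t : ℕ) - (n - k - 1), by omega⟩ : Fin (k+1)) = ⟨t + 1, by omega⟩ := by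
    ext; simp; omega
  simp only [Fin.val_mk, this, finRotate_inv_succ k t ht]

end Main2

section Main3
variable {K : Type*} [Field K]

def Amat (n k : ℕ) (hkn : k < n) (ω : ℕ → Polynomial K)
    (M : Matrix (Fin (n - k)) (Fin n) K) : Matrix (Fin (n - k)) (Fin (n - k)) (Polynomial K) :=
  Matrix.of fun r c =>
    if (c : ℕ) = n - k - 1 then
      ∑ t ∈ Finset.range (k + 1), ω t * Polynomial.C (M r ⟨n - 1 - t, by omega⟩)
    else Polynomial.C (M r ⟨(c : ℕ), by have := c.isLt; omega⟩)

lemma Nmat_block (n k : ℕ) (hk0 : 0 < k) (hkn : k < n) (ω : ℕ → Polynomial K)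
    (hω : IsGeneralBasis n ω) (M : Matrix (Fin (n - k)) (Fin n) K) :
    (Nmat n k hk0 hkn ω M).submatrix (⇑(eSum n k hkn))
        (⇑(τperm n k hk0 hkn) ∘ ⇑(eSum n k hkn)) =
      Matrix.fromBlocks (Amat n k hkn ω M)
        (Matrix.of fun (r : Fin (n - k)) (c : Fin k) =>
          (Nmat n k hk0 hkn ω M) (eSum n k hkn (Sum.inl r))
            (τperm n k hk0 hkn (eSum n k hkn (Sum.inr c))))
        0 (-1) := by
  have heL : ∀ r : Fin (n - k), ((eSum n k hkn (Sum.inl r) : Fin n) : ℕ) = (r : ℕ) := by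
    intro r; simp [eSum]
  have heR : ∀ r : Fin k, ((eSum n k hkn (Sum.inr r) : Fin n) : ℕ) = (n - k) + (r : ℕ) := by
    intro r; simp [eSum]
  have hM : ∀ (a b : Fin (n - k)) (x y : Fin n), (a : ℕ) = (b : ℕ) → (x : ℕ) = (y : ℕ) →
      M a x = M b y := fun a b x y h1 h2 => by
    cases Fin.ext h1; cases Fin.ext h2; rfl
  refine Matrix.ext fun i j => ?_
  rw [Nmat_eq n k hk0 hkn ω hω M]
  cases i with
  | inl r =>
    cases j with
    | inr c => simp [Matrix.fromBlocks, Nmat_eq n k hk0 hkn ω hω M]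
    | inl c =>
      have hc := c.isLt
      simp only [Matrix.submatrix_apply, Function.comp_apply, Matrix.fromBlocks_apply₁₁]
      by_cases hcl : (c : ℕ) = n - k - 1
      · have hcfix : eSum n k hkn (Sum.inl c) = ⟨n - k - 1, by omega⟩ := by
          ext; rw [heL]; exact hcl
        rw [hcfix, τperm_first n k hk0 hkn, Matrix.of_apply, if_pos rfl, dif_pos (by rw [heL]; omega)]
        rw [Amat, Matrix.of_apply, if_pos hcl]
        exact Finset.sum_congr rfl fun t _ =>
          congrArg₂ _ rfl (congrArg _ (hM _ _ _ _ (heL r) rfl))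
      · have hfix : τperm n k hk0 hkn (eSum n k hkn (Sum.inl c)) = eSum n k hkn (Sum.inl c) :=
          τperm_fix n k hk0 hkn _ (by rw [heL]; omega)
        rw [hfix, Matrix.of_apply, if_neg (by rw [heL]; omega)]
        rw [stackMat, Matrix.of_apply, dif_pos (show ((eSum n k hkn (Sum.inl r) : Fin n) : ℕ) < n - k by rw [heL]; exact r.isLt)]
        rw [Amat, Matrix.of_apply, if_neg hcl]
        exact congrArg _ (hM _ _ _ _ (heL r) (heL c).symm)
  | inr r =>
    have hr := r.isLt
    cases j with
    | inl c =>
      have hc := c.isLt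
      simp only [Matrix.submatrix_apply, Function.comp_apply, Matrix.fromBlocks_apply₂₁,
        Matrix.zero_apply]
      by_cases hcl : (c : ℕ) = n - k - 1
      · have hcfix : eSum n k hkn (Sum.inl c) = ⟨n - k - 1, by omega⟩ := by
          ext; rw [heL]; exact hcl
        rw [hcfix, τperm_first n k hk0 hkn, Matrix.of_apply, if_pos rfl,
          dif_neg (by rw [heR]; omega)]
      · have hfix : τperm n k hk0 hkn (eSum n k hkn (Sum.inl c)) = eSum n k hkn (Sum.inl c) :=
          τperm_fix n k hk0 hkn _ (by rw [heL]; omega)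
        rw [hfix, Matrix.of_apply, if_neg (by rw [heL]; omega)]
        rw [stackMat, Matrix.of_apply, dif_neg (by rw [heR]; omega)]
        rw [Xmat, Matrix.of_apply,
          if_neg (by simp only [Fin.val_mk]; rw [heR, heL]; omega),
          if_neg (by rw [heL]; omega)]
    | inr c =>
      have hc := c.isLt
      simp only [Matrix.submatrix_apply, Function.comp_apply, Matrix.fromBlocks_apply₂₂]
      have hcfix : eSum n k hkn (Sum.inr c) = ⟨n - k + (c : ℕ), by omega⟩ := by
        ext; rw [heR]
      rw [hcfix, τperm_succ n k hk0 hkn (c : ℕ) hc, Matrix.of_apply,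
        if_neg (by simp; omega)]
      rw [stackMat, Matrix.of_apply, dif_neg (by rw [heR]; omega)]
      rw [Xmat, Matrix.of_apply]
      by_cases hrc : (r : ℕ) = (c : ℕ)
      · rw [if_pos (by simp only [Fin.val_mk]; rw [heR]; omega)]
        simp [Matrix.one_apply, Fin.ext_iff, hrc]
      · rw [if_neg (by simp only [Fin.val_mk]; rw [heR]; omega), if_neg (by simp; omega)]
        simp [Matrix.one_apply, Fin.ext_iff]
        omega

end Main3
section Main4
variable {K : Type*} [Field K]

lemma det_Amat (n k : ℕ) (hk0 : 0 < k) (hkn : k < n) (ω : ℕ → Polynomial K)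
    (M : Matrix (Fin (n - k)) (Fin n) K) :
    (Amat n k hkn ω M).det = detp hkn ω M := by
  have hjl : n - k - 1 < n - k := by omega
  set jl : Fin (n - k) := ⟨n - k - 1, hjl⟩ with hjldef
  have hAcol : Amat n k hkn ω M = updateCol (Amat n k hkn ω M) jl
      (fun r => ∑ t ∈ Finset.range (k + 1),
        (fun (t : ℕ) (r : Fin (n - k)) => ω t * Polynomial.C (M r ⟨n - 1 - t, by omega⟩)) t r) := by
    refine Matrix.ext fun r c => ?_
    by_cases hc : c = jl
    · subst hc
      rw [Matrix.updateCol_self, Amat, Matrix.of_apply, if_pos rfl]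
    · rw [Matrix.updateCol_ne hc]
  rw [hAcol, det_updateColumn_sum', _root_.detp]
  refine Finset.sum_congr rfl fun t ht => ?_
  have hsmul : (fun (r : Fin (n - k)) => ω t * Polynomial.C (M r ⟨n - 1 - t, by omega⟩))
      = (ω t • fun (r : Fin (n - k)) => Polynomial.C (M r ⟨n - 1 - t, by omega⟩)) := by
    funext r; simp
  rw [hsmul, det_updateCol_smul]
  have hup : updateCol (Amat n k hkn ω M) jl
        (fun (r : Fin (n - k)) => Polynomial.C (M r ⟨n - 1 - t, by omega⟩))
      = ((Matrix.of fun r c : Fin (n - k) =>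
          if (c : ℕ) < n - k - 1 then M r ⟨(c : ℕ), by have := c.isLt; omega⟩
          else M r ⟨n - 1 - t, by omega⟩).map Polynomial.C) := by
    refine Matrix.ext fun r c => ?_
    rw [Matrix.map_apply, Matrix.of_apply]
    by_cases hc : c = jl
    · subst hc
      rw [Matrix.updateCol_self, if_neg (by simp only [hjldef, Fin.val_mk]; omega)]
    · have hclt : (c : ℕ) < n - k - 1 := by
        have := c.isLt
        have : (c : ℕ) ≠ n - k - 1 := fun h => hc (Fin.ext h)
        omega
      rw [Matrix.updateCol_ne hc, Amat, Matrix.of_apply, if_neg (by omega), if_pos hclt]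
  rw [hup, mul_comm]
  congr 1
  have := (RingHom.map_det (Polynomial.C : K →+* Polynomial K)
    (Matrix.of fun r c : Fin (n - k) =>
      if (c : ℕ) < n - k - 1 then M r ⟨(c : ℕ), by have := c.isLt; omega⟩
      else M r ⟨n - 1 - t, by omega⟩)).symm
  rw [RingHom.mapMatrix_apply] at this
  exact this

theorem detp_eq_stack_det_aux
    {K : Type*} [Field K] (n k : ℕ) (hk0 : 0 < k) (hkn : k < n)
    (ω : ℕ → Polynomial K) (hω : IsGeneralBasis n ω)
    (M : Matrix (Fin (n - k)) (Fin n) K) :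
    detp hkn ω M = (stackMat M (Xmat n k ω)).det := by
  set N := Nmat n k hk0 hkn ω M with hN
  set τ := τperm n k hk0 hkn with hτ
  set e := eSum n k hkn with he
  have hdetN : N.det = (stackMat M (Xmat n k ω)).det := det_Nmat n k hk0 hkn ω M
  have hperm : (N.submatrix id ⇑τ).det = (Equiv.Perm.sign τ : ℤ) * N.det :=
    Matrix.det_permute' τ N
  have hsub : ((N.submatrix id ⇑τ).submatrix ⇑e ⇑e) = N.submatrix ⇑e (⇑τ ∘ ⇑e) := by
    rw [Matrix.submatrix_submatrix]
    rfl
  have h1 : (N.submatrix ⇑e (⇑τ ∘ ⇑e)).det = (Amat n k hkn ω M).det * (-1) ^ k := by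
    rw [hN, hτ, he, Nmat_block n k hk0 hkn ω hω M, Matrix.det_fromBlocks_zero₂₁]
    congr 1
    have : (-1 : Matrix (Fin k) (Fin k) (Polynomial K)) = -(1 : Matrix (Fin k) (Fin k) (Polynomial K)) := rfl
    rw [this, Matrix.det_neg, Matrix.det_one, Fintype.card_fin, mul_one]
  have hsign : ((Equiv.Perm.sign τ : ℤ) : Polynomial K) = (-1) ^ k := by
    rw [hτ, τperm, Equiv.Perm.sign_extendDomain, Equiv.Perm.sign_inv, sign_finRotate]
    push_cast
    ring
  have h2 : (N.submatrix ⇑e (⇑τ ∘ ⇑e)).det = ((-1 : Polynomial K)) ^ k * N.det := by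
    rw [← hsub, Matrix.det_submatrix_equiv_self, hperm, hsign]
  have hne : ((-1 : Polynomial K)) ^ k ≠ 0 := pow_ne_zero _ (by norm_num)
  have hNA : N.det = (Amat n k hkn ω M).det := by
    have h3 : ((-1 : Polynomial K)) ^ k * N.det = ((-1 : Polynomial K)) ^ k * (Amat n k hkn ω M).det := by
      rw [← h2, h1, mul_comm]
    exact mul_left_cancel₀ hne h3
  rw [← det_Amat n k hk0 hkn ω M, ← hNA, hdetN]


end Main4

/-- for any `(n−k) × n` matrix `M` over `F`,
`detp_ω M = det [M; X_{ω,k}]` in `F[x]`. -/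
theorem detp_eq_stack_det
    {K : Type*} [Field K] (n k : ℕ) (hk0 : 0 < k) (hkn : k < n)
    (ω : ℕ → Polynomial K) (hω : IsGeneralBasis n ω)
    (M : Matrix (Fin (n - k)) (Fin n) K) :
    detp hkn ω M = (stackMat M (Xmat n k ω)).det := by
  exact detp_eq_stack_det_aux n k hk0 hkn ω hω M
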